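/- Define the Hahn polynomial Q_n(x; \alpha,\beta,m) = \sum_{k=0}^n ((-n)_k (n+\alpha+\beta+1)_k (-x)_k) / ((\alpha+1)_k (-m)_k k!) as a terminating 3F2 sum. Then for natural numbers x, n, m with m \ge 1 and n \le m-1, (x+1) Q_n(x; \alpha,\beta,m-1) - (x-m+1) Q_n(x+1; \alpha,\beta,m-1) = m \cdot Q_n(x+1; \alpha,\beta,m). -/

import Mathlib

open Finset

noncomputable def poch (a : ℂ) (k : ℕ) : ℂ := (ascPochhammer ℂ k).eval a

/-- Hahn polynomial as terminating ₃F₂ sum. -/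
noncomputable def hahnQ (n x : ℕ) (α β : ℂ) (m : ℕ) : ℂ :=
  ∑ k ∈ range (n + 1),
    poch (-(n : ℂ)) k * poch ((n : ℂ) + α + β + 1) k * poch (-(x : ℂ)) k /
      (poch (α + 1) k * poch (-(m : ℂ)) k * (k.factorial : ℂ))

lemma poch_succ_right (a : ℂ) (k : ℕ) : poch a (k + 1) = poch a k * (a + k) := by
  simp [poch, ascPochhammer_succ_right]

lemma poch_succ_left (a : ℂ) (k : ℕ) : poch a (k + 1) = a * poch (a + 1) k := by
  simp [poch, ascPochhammer_succ_left, Polynomial.eval_comp]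

lemma poch_shift (a : ℂ) (k : ℕ) : poch a k * (a + k) = a * poch (a + 1) k := by
  rw [← poch_succ_right, poch_succ_left]

lemma poch_neg_ne_zero {k N : ℕ} (h : k ≤ N) : poch (-(N : ℂ)) k ≠ 0 := by
  induction k with
  | zero => simp [poch]
  | succ k ih =>
    rw [poch_succ_right]
    refine mul_ne_zero (ih (Nat.le_of_succ_le h)) ?_
    intro hc
    have hk : (N : ℂ) = (k : ℂ) := by linear_combination -hc
    have : N = k := by exact_mod_cast hk
    omega

theorem hahn_difference_eq1 (n x m : ℕ) (α β : ℂ) (hm : 1 ≤ m) (hn : n ≤ m - 1)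
    (h1 : ∀ k ≤ n, poch (α + 1) k ≠ 0) :
    ((x : ℂ) + 1) * hahnQ n x α β (m - 1) - ((x : ℂ) - (m : ℂ) + 1) * hahnQ n (x + 1) α β (m - 1) =
    (m : ℂ) * hahnQ n (x + 1) α β m := by
  unfold hahnQ
  rw [Finset.mul_sum, Finset.mul_sum, Finset.mul_sum, ← Finset.sum_sub_distrib]
  refine Finset.sum_congr rfl fun k hk => ?_
  have hk' : k ≤ n := Nat.lt_succ_iff.mp (mem_range.mp hk)
  have hkm1 : k ≤ m - 1 := le_trans hk' hn
  have hkm : k ≤ m := le_trans hkm1 (Nat.sub_le m 1)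
  have hα := h1 k hk'
  have hfac : (k.factorial : ℂ) ≠ 0 := by exact_mod_cast k.factorial_ne_zero
  have hD1 : poch (-((m - 1 : ℕ) : ℂ)) k ≠ 0 := poch_neg_ne_zero hkm1
  have hD2 : poch (-(m : ℂ)) k ≠ 0 := poch_neg_ne_zero hkm
  have hcastm : ((m - 1 : ℕ) : ℂ) = (m : ℂ) - 1 := by
    push_cast [hm]; ring
  have hcastx : (((x + 1 : ℕ)) : ℂ) = (x : ℂ) + 1 := by push_cast; ring
  -- key pochhammer identities
  have id1 : poch (-((x : ℂ) + 1)) k * (-((x : ℂ) + 1) + k) =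
      -((x : ℂ) + 1) * poch (-(x : ℂ)) k := by
    have := poch_shift (-((x : ℂ) + 1)) k
    rwa [show (-((x : ℂ) + 1) + 1) = -(x : ℂ) by ring] at this
  have id2 : poch (-(m : ℂ)) k * (-(m : ℂ) + k) =
      -(m : ℂ) * poch (-((m : ℂ) - 1)) k := by
    have := poch_shift (-(m : ℂ)) k
    rwa [show (-(m : ℂ) + 1) = -((m : ℂ) - 1) by ring] at this
  rw [hcastm] at hD1
  rw [hcastm, hcastx]
  set C := poch (-(n : ℂ)) k * poch ((n : ℂ) + α + β + 1) k with hC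
  set P1 := poch (-(x : ℂ)) k
  set P2 := poch (-((x : ℂ) + 1)) k
  set D1 := poch (-((m : ℂ) - 1)) k
  set D2 := poch (-(m : ℂ)) k
  have key : (((x : ℂ) + 1) * P1 - ((x : ℂ) - m + 1) * P2) * D2 = (m : ℂ) * P2 * D1 := by
    linear_combination D2 * id1 - P2 * id2
  field_simp
  linear_combination (poch (-(n : ℂ)) k * poch ((n : ℂ) + α + β + 1) k) * key
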